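/- Let Ω ⊆ ℝ² be open, let B : Ω → ℝ^{2×2} be a C¹ map valued in symmetric 2×2 matrices, and let θ : Ω → ℝ be C¹. Let R₁ := (cos θ, sin θ) and R₂ := (−sin θ, cos θ), and let B_j denote the j-th column of B. Then at every point of Ω: [B R₂, B R₁] = B² ∇θ + [B₂, B₁], where [U,V] := (U·∇)V − (V·∇)U. -/

import Mathlib

open Matrix

noncomputable section

abbrev V2 : Type := Fin 2 → ℝ
abbrev M2 : Type := Matrix (Fin 2) (Fin 2) ℝ

def Jmat : M2 := !![0, -1; 1, 0]

def Umat : M2 := !![1, 0; 0, -1]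

def det2 (a b : V2) : ℝ := a 0 * b 1 - a 1 * b 0

noncomputable def gradv (f : V2 → ℝ) (x : V2) : V2 :=
  fun i => fderiv ℝ f x (Pi.single i 1)

noncomputable def divv (W : V2 → V2) (x : V2) : ℝ :=
  ∑ i, fderiv ℝ (fun y => W y i) x (Pi.single i 1)

noncomputable def divOp (γ : V2 → M2) (u : V2 → ℝ) (x : V2) : ℝ :=
  divv (fun y => γ y *ᵥ gradv u y) x

noncomputable def Svec (A : V2 → M2) (u : V2 → ℝ) (x : V2) : V2 :=
  A x *ᵥ gradv u x

noncomputable def Atil (A : V2 → M2) (x : V2) : M2 :=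
  (Real.sqrt (A x).det)⁻¹ • A x

noncomputable def Hmat (A : V2 → M2) (u : Fin 2 → V2 → ℝ) (x : V2) : M2 :=
  Matrix.of fun i j => Svec A (u i) x ⬝ᵥ Svec A (u j) x

noncomputable def Smat (A : V2 → M2) (u : Fin 2 → V2 → ℝ) (x : V2) : M2 :=
  Matrix.of fun i j => Svec A (u j) x i

noncomputable def Vf (T : V2 → M2) (i j : Fin 2) (x : V2) : V2 :=
  ∑ k, ((T x)⁻¹ k j) • gradv (fun y => T y i k) x

noncomputable def lieB (U W : V2 → V2) (x : V2) : V2 :=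
  fun j => (∑ i, U x i * fderiv ℝ (fun y => W y j) x (Pi.single i 1))
         - (∑ i, W x i * fderiv ℝ (fun y => U y j) x (Pi.single i 1))

def colf (B : V2 → M2) (j : Fin 2) : V2 → V2 := fun x i => B x i j

noncomputable def Nvec (A : V2 → M2) (u : Fin 2 → V2 → ℝ) (x : V2) : V2 :=
  (1/2 : ℝ) • gradv (fun y => Real.log (Hmat A u y).det) x

noncomputable def unitv (v : V2) : V2 := (Real.sqrt (v ⬝ᵥ v))⁻¹ • v

noncomputable def Mparam (a b : ℝ) : M2 := !![a, b; b, (1 + b^2)/a]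

noncomputable def Rcol (A : V2 → M2) (u : Fin 2 → V2 → ℝ) (T : V2 → M2) (i : Fin 2) (x : V2) : V2 :=
  fun j => (Smat A u x * (T x)ᵀ) j i

noncomputable def Rot (t : ℝ) : M2 := !![Real.cos t, -Real.sin t; Real.sin t, Real.cos t]

theorem stmt10 (Ω : Set V2) (hΩ : IsOpen Ω)
    (B : V2 → M2) (hBsym : ∀ x ∈ Ω, (B x).IsSymm)
    (hB : ∀ i j, ContDiffOn ℝ 1 (fun x => B x i j) Ω)
    (θ : V2 → ℝ) (hθ : ContDiffOn ℝ 1 θ Ω) :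
    ∀ x ∈ Ω,
      lieB (fun y => B y *ᵥ ![-Real.sin (θ y), Real.cos (θ y)])
           (fun y => B y *ᵥ ![Real.cos (θ y), Real.sin (θ y)]) x
        = (B x * B x) *ᵥ gradv θ x + lieB (colf B 1) (colf B 0) x := by
  intro x hx
  have hmem : Ω ∈ nhds x := hΩ.mem_nhds hx
  have hθd : DifferentiableAt ℝ θ x := (hθ.differentiableOn one_ne_zero).differentiableAt hmem
  have hBd : ∀ i j : Fin 2, DifferentiableAt ℝ (fun y => B y i j) x := fun i j =>
    ((hB i j).differentiableOn one_ne_zero).differentiableAt hmem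
  have h10 : B x 1 0 = B x 0 1 := congrFun (congrFun (hBsym x hx) 0) 1
  have hV : ∀ (j : Fin 2) (v : V2),
      fderiv ℝ (fun y => B y j 0 * Real.cos (θ y) + B y j 1 * Real.sin (θ y)) x v
        = Real.cos (θ x) * fderiv ℝ (fun y => B y j 0) x v
          + Real.sin (θ x) * fderiv ℝ (fun y => B y j 1) x v
          + (B x j 1 * Real.cos (θ x) - B x j 0 * Real.sin (θ x)) * fderiv ℝ θ x v := by
    intro j v
    have h : fderiv ℝ (fun y => B y j 0 * Real.cos (θ y) + B y j 1 * Real.sin (θ y)) x = _ :=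
      (((hBd j 0).hasFDerivAt.mul hθd.hasFDerivAt.cos).add
      ((hBd j 1).hasFDerivAt.mul hθd.hasFDerivAt.sin)).fderiv
    rw [h]
    simp [ContinuousLinearMap.add_apply, ContinuousLinearMap.smul_apply, smul_eq_mul]
    ring
  have hU : ∀ (j : Fin 2) (v : V2),
      fderiv ℝ (fun y => B y j 0 * -Real.sin (θ y) + B y j 1 * Real.cos (θ y)) x v
        = -Real.sin (θ x) * fderiv ℝ (fun y => B y j 0) x v
          + Real.cos (θ x) * fderiv ℝ (fun y => B y j 1) x v
          + (-(B x j 0 * Real.cos (θ x)) - B x j 1 * Real.sin (θ x)) * fderiv ℝ θ x v := by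
    intro j v
    have h : fderiv ℝ (fun y => B y j 0 * -Real.sin (θ y) + B y j 1 * Real.cos (θ y)) x = _ :=
      (((hBd j 0).hasFDerivAt.mul hθd.hasFDerivAt.sin.neg).add
      ((hBd j 1).hasFDerivAt.mul hθd.hasFDerivAt.cos)).fderiv
    rw [h]
    simp [ContinuousLinearMap.add_apply, ContinuousLinearMap.smul_apply, smul_eq_mul]
    ring
  funext j
  simp only [lieB, colf, gradv, Pi.add_apply, Matrix.mulVec, dotProduct,
    Fin.sum_univ_two, Matrix.cons_val_zero, Matrix.cons_val_one, Matrix.head_cons,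
    Matrix.mul_apply]
  rw [hV j, hV j, hU j, hU j]
  rw [h10]
  linear_combination (B x 0 1 * (fderiv ℝ (fun y => B y j 0) x) (Pi.single 0 1)
      + B x 1 1 * (fderiv ℝ (fun y => B y j 0) x) (Pi.single 1 1)
      - B x 0 0 * (fderiv ℝ (fun y => B y j 1) x) (Pi.single 0 1)
      - B x 0 1 * (fderiv ℝ (fun y => B y j 1) x) (Pi.single 1 1)
      + (B x j 0 * B x 0 0 + B x j 1 * B x 0 1) * (fderiv ℝ θ x) (Pi.single 0 1)
      + (B x j 0 * B x 0 1 + B x j 1 * B x 1 1) * (fderiv ℝ θ x) (Pi.single 1 1))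
    * Real.sin_sq_add_cos_sq (θ x)


end
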